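/- Let m = 4k, n = 2k, and r ∈ R²_m. Then |ZDiv(r + 1)/⟨r − 1⟩| = 2 (equivalently, gcd(r + 1, n)·gcd(r − 1, n) = 2n) if and only if m = 2^α·l with α ≥ 2 and l odd, and r ≡ ±1 (mod 2^{α−1}). -/

import Mathlib

namespace QDPaper

/-- The "twisting" coefficient: `b * a = a^(n-1) * b` where `n = 2k`, so conjugation by `b`
multiplies the exponent of `a` by `2k - 1` (mod `4k`). -/
def twist (k : ℕ) : Bool → ZMod (4*k)
  | false => 1
  | true => 2 * (k : ZMod (4*k)) - 1

lemma twist_sq (k : ℕ) : twist k true * twist k true = 1 := by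
  have h : ((4*k : ℕ) : ZMod (4*k)) = 0 := ZMod.natCast_self _
  push_cast at h
  show (2 * (k : ZMod (4*k)) - 1) * (2 * (k : ZMod (4*k)) - 1) = 1
  linear_combination ((k : ZMod (4*k)) - 1) * h

lemma twist_mul (k : ℕ) (b1 b2 : Bool) :
    twist k b1 * twist k b2 = twist k (Bool.xor b1 b2) := by
  cases b1 <;> cases b2
  · simp [twist]
  · simp [twist]
  · simp [twist]
  · exact (twist_sq k).trans rfl

/-- The quasi-dihedral (semidihedral) group
`QD_{2m} = ⟨a, b | a^m = b^2 = 1, b a = a^(n-1) b⟩` with `m = 4k`, `n = 2k`,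
realized concretely on pairs `(j, t)` standing for the normal form `a^j * b^t`. -/
def QuasiDihedral (k : ℕ) : Type := ZMod (4*k) × Bool

namespace QuasiDihedral

variable {k : ℕ}

instance : Group (QuasiDihedral k) where
  mul x y := (x.1 + twist k x.2 * y.1, Bool.xor x.2 y.2)
  one := ((0 : ZMod (4*k)), false)
  inv x := (-(twist k x.2) * x.1, x.2)
  mul_assoc x y z := by
    show ((x.1 + twist k x.2 * y.1) + twist k (Bool.xor x.2 y.2) * z.1,
        Bool.xor (Bool.xor x.2 y.2) z.2)
      = (x.1 + twist k x.2 * (y.1 + twist k y.2 * z.1), Bool.xor x.2 (Bool.xor y.2 z.2))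
    rw [Prod.mk.injEq]
    exact ⟨by rw [← twist_mul]; ring, Bool.xor_assoc _ _ _⟩
  one_mul x := by
    obtain ⟨j, t⟩ := x
    show ((0 : ZMod (4*k)) + twist k false * j, Bool.xor false t) = (j, t)
    simp [twist]
  mul_one x := by
    obtain ⟨j, t⟩ := x
    show (j + twist k t * 0, Bool.xor t false) = (j, t)
    simp
  inv_mul_cancel x := by
    show ((-(twist k x.2) * x.1) + twist k x.2 * x.1, Bool.xor x.2 x.2)
      = ((0 : ZMod (4*k)), false)
    rw [Prod.mk.injEq]
    exact ⟨by ring, Bool.xor_self _⟩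

end QuasiDihedral

/-- The generator `a` of the cyclic subgroup of order `m = 4k`. -/
def a (k : ℕ) : QuasiDihedral k := ((1 : ZMod (4*k)), false)

/-- The generator `b`, an element of order `2`. -/
def b (k : ℕ) : QuasiDihedral k := ((0 : ZMod (4*k)), true)

/-- `ZDiv(c) = {y ∈ Z_n : c·y = 0}` (with `n = 2k`), as an additive subgroup of `Z_n`. -/
def ZDiv (k : ℕ) (c : ZMod (2*k)) : AddSubgroup (ZMod (2*k)) where
  carrier := {y | c * y = 0}
  zero_mem' := by simp
  add_mem' := by
    intro x y hx hy
    simp only [Set.mem_setOf_eq] at hx hy ⊢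
    rw [mul_add, hx, hy, add_zero]
  neg_mem' := by
    intro x hx
    simp only [Set.mem_setOf_eq] at hx ⊢
    rw [mul_neg, hx, neg_zero]


-- gcd of four, key identity
lemma natgcd (a b n : ℕ) :
    Nat.gcd a n * Nat.gcd b n = Nat.gcd (a*b) (n * Nat.gcd n (Nat.gcd a b)) := by
  rw [← Nat.gcd_mul_right, ← Nat.gcd_mul_left, ← Nat.gcd_mul_left, ← Nat.gcd_mul_left,
    ← Nat.gcd_mul_left]
  simp only [Nat.gcd_comm, Nat.gcd_assoc]
  congr 1
  rw [mul_comm a n, ← Nat.gcd_assoc, Nat.gcd_comm]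

lemma gcd_emod (x : ℤ) (n : ℕ) : Int.gcd (x % (n:ℤ)) n = Int.gcd x n := by
  have hx : (n:ℤ) * (x / n) + x % n = x := Int.mul_ediv_add_emod x n
  apply Nat.dvd_antisymm
  · apply Int.natCast_dvd_natCast.mp
    apply Int.dvd_coe_gcd
    · have h1 : (↑(Int.gcd (x % (n:ℤ)) n) : ℤ) ∣ x % n := (Int.gcd_dvd_left _ _)
      have h2 : (↑(Int.gcd (x % (n:ℤ)) n) : ℤ) ∣ (n:ℤ) := (Int.gcd_dvd_right _ _)
      calc (↑(Int.gcd (x % (n:ℤ)) n) : ℤ) ∣ (n:ℤ) * (x / n) + x % n :=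
            dvd_add (h2.mul_right _) h1
        _ = x := hx
    · exact (Int.gcd_dvd_right _ _)
  · apply Int.natCast_dvd_natCast.mp
    apply Int.dvd_coe_gcd
    · have h1 : (↑(Int.gcd x n) : ℤ) ∣ x := (Int.gcd_dvd_left _ _)
      have h2 : (↑(Int.gcd x n) : ℤ) ∣ (n:ℤ) := (Int.gcd_dvd_right _ _)
      have : (↑(Int.gcd x n) : ℤ) ∣ x - (n:ℤ) * (x / n) := dvd_sub h1 (h2.mul_right _)
      rwa [← Int.emod_def] at this
    · exact (Int.gcd_dvd_right _ _)

lemma int_gcd_eq (x : ℤ) (n : ℕ) (hn : n ≠ 0) :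
    Int.gcd x n = Nat.gcd n (x % (n:ℤ)).toNat := by
  have h0 : (0:ℤ) ≤ x % n := Int.emod_nonneg x (by exact_mod_cast hn)
  rw [← gcd_emod x n, Int.gcd_eq_natAbs, Int.natAbs_natCast, Nat.gcd_comm]
  congr 1
  omega

lemma addOrder_intCast (x : ℤ) (n : ℕ) (hn : n ≠ 0) :
    addOrderOf ((x : ZMod n)) = n / Int.gcd x n := by
  have h0 : (0:ℤ) ≤ x % n := Int.emod_nonneg x (by exact_mod_cast hn)
  have hx : ((x % (n:ℤ)).toNat : ZMod n) = (x : ZMod n) := by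
    have : (((x % (n:ℤ)).toNat : ℤ) : ZMod n) = (x : ZMod n) := by
      rw [ZMod.intCast_eq_intCast_iff]
      show ((x % (n:ℤ)).toNat : ℤ) % n = x % n
      rw [Int.toNat_of_nonneg h0]
      exact Int.emod_emod_of_dvd x dvd_rfl
    rwa [Int.cast_natCast] at this
  rw [← hx, ZMod.addOrderOf_coe _ hn, int_gcd_eq x n hn]

lemma coprime_two_int (x : ℤ) (hx : Odd x) : IsCoprime (2:ℤ) x := by
  rw [Int.isCoprime_iff_gcd_eq_one]
  have hodd : Odd x.natAbs := Int.natAbs_odd.mpr hx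
  have h2 : Nat.gcd 2 x.natAbs ∣ 2 := Nat.gcd_dvd_left _ _
  rcases (Nat.dvd_prime Nat.prime_two).mp h2 with h | h
  · simpa [Int.gcd] using h
  · exfalso
    have : 2 ∣ x.natAbs := h ▸ Nat.gcd_dvd_right _ _
    exact ((Nat.not_even_iff_odd.mpr hodd)) (even_iff_two_dvd.mpr this)

lemma mem_ZDiv {k : ℕ} {c y : ZMod (2*k)} : y ∈ ZDiv k c ↔ c * y = 0 := Iff.rfl

lemma card_ZDiv (k : ℕ) (hk : k ≠ 0) (x : ℤ) :
    Nat.card (ZDiv k ((x : ZMod (2*k)))) = Int.gcd x ((2*k : ℕ) : ℤ) := by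
  have hn : (2*k) ≠ 0 := by omega
  haveI : NeZero (2*k) := ⟨hn⟩
  set c : ZMod (2*k) := ((x:ℤ) : ZMod (2*k)) with hc
  set f : ZMod (2*k) →+ ZMod (2*k) := AddMonoidHom.mulLeft c with hf
  have hker : f.ker = ZDiv k c := by
    ext y
    simp [AddMonoidHom.mem_ker, mem_ZDiv, hf, AddMonoidHom.mulLeft]
  have hrange : f.range = AddSubgroup.zmultiples c := by
    ext y
    constructor
    · rintro ⟨z, rfl⟩
      refine ⟨(z.val : ℤ), ?_⟩
      show ((z.val : ℤ)) • c = f z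
      rw [zsmul_eq_mul]
      push_cast
      rw [ZMod.natCast_val, ZMod.cast_id]
      show z * c = f z
      simp [hf, AddMonoidHom.mulLeft, mul_comm]
    · rintro ⟨t, rfl⟩
      refine ⟨(t : ZMod (2*k)), ?_⟩
      show f _ = t • c
      rw [zsmul_eq_mul]
      show c * _ = _
      exact mul_comm _ _
  have h1 : Nat.card (ZMod (2*k)) = Nat.card (ZMod (2*k) ⧸ f.ker) * Nat.card f.ker :=
    AddSubgroup.card_eq_card_quotient_mul_card_addSubgroup f.ker
  have h2 : Nat.card (ZMod (2*k) ⧸ f.ker) = Nat.card f.range :=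
    Nat.card_congr (QuotientAddGroup.quotientKerEquivRange f).toEquiv
  have h3 : Nat.card f.range = addOrderOf c := by
    rw [hrange]; exact Nat.card_zmultiples c
  have h4 : addOrderOf c = (2*k) / Int.gcd x ((2*k:ℕ):ℤ) := addOrder_intCast x (2*k) hn
  set g := Int.gcd x ((2*k:ℕ):ℤ) with hg
  have hgdvd : g ∣ 2*k := by
    have := Int.gcd_dvd_right (a := x) (b := ((2*k:ℕ):ℤ))
    exact_mod_cast this
  have hgpos : 0 < g := by
    apply Int.gcd_pos_iff.mpr
    right
    exact_mod_cast hn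
  have hdivpos : 0 < 2*k / g := Nat.div_pos (Nat.le_of_dvd (by omega) hgdvd) hgpos
  have heq : 2*k = (2*k / g) * Nat.card (ZDiv k c) := by
    rw [h2, h3, h4, Nat.card_zmod, hker] at h1
    exact h1
  have : (2*k) / (2*k / g) = Nat.card (ZDiv k c) :=
    Nat.div_eq_of_eq_mul_left hdivpos (heq.trans (mul_comm _ _))
  rw [← this, Nat.div_div_self hgdvd hn]

lemma NT (k : ℕ) (hk : 1 ≤ k) (r : ℤ) (hodd : Odd r)
    (h2k : ((2*k : ℕ) : ℤ) ∣ r^2 - 1) :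
    (Int.gcd (r+1) ((2*k:ℕ):ℤ) * Int.gcd (r-1) ((2*k:ℕ):ℤ) = 2*(2*k)
      ↔ ∃ α l : ℕ, 4*k = 2^α*l ∧ Odd l ∧ 2 ≤ α ∧
        (r ≡ 1 [ZMOD (2^(α-1))] ∨ r ≡ -1 [ZMOD (2^(α-1))])) := by
  obtain ⟨m, hm⟩ := hodd
  -- gcd (r+1) (r-1) = 2
  have hg2 : Int.gcd (r+1) (r-1) = 2 := by
    apply Nat.dvd_antisymm
    · have h := dvd_sub (Int.gcd_dvd_left (a := r+1) (b := r-1)) (Int.gcd_dvd_right _ _)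
      have h2 : (↑(Int.gcd (r+1) (r-1)) : ℤ) ∣ 2 := by
        have : (r+1) - (r-1) = 2 := by ring
        rwa [this] at h
      exact_mod_cast h2
    · have h2 : (2:ℤ) ∣ ↑(Int.gcd (r+1) (r-1)) :=
        Int.dvd_coe_gcd ⟨m+1, by omega⟩ ⟨m, by omega⟩
      exact_mod_cast h2
  -- product of gcds
  have key : Int.gcd (r+1) ((2*k:ℕ):ℤ) * Int.gcd (r-1) ((2*k:ℕ):ℤ)
      = Int.gcd (r^2-1) ((4*k:ℕ):ℤ) := by
    have e1 : Int.gcd (r+1) ((2*k:ℕ):ℤ) = Nat.gcd (r+1).natAbs (2*k) := by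
      rw [Int.gcd_eq_natAbs, Int.natAbs_natCast]
    have e2 : Int.gcd (r-1) ((2*k:ℕ):ℤ) = Nat.gcd (r-1).natAbs (2*k) := by
      rw [Int.gcd_eq_natAbs, Int.natAbs_natCast]
    have e3 : Int.gcd (r^2-1) ((4*k:ℕ):ℤ) = Nat.gcd ((r+1).natAbs * (r-1).natAbs) (4*k) := by
      rw [Int.gcd_eq_natAbs, Int.natAbs_natCast, ← Int.natAbs_mul]
      congr 2
      ring
    have e4 : Nat.gcd (r+1).natAbs (r-1).natAbs = 2 := by
      rw [← Int.gcd_eq_natAbs] at *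
      exact hg2
    rw [e1, e2, e3, natgcd, e4]
    have : Nat.gcd (2*k) 2 = 2 := Nat.gcd_eq_right ⟨k, rfl⟩
    rw [this]
    congr 1
    ring
  rw [key]
  -- gcd (r²-1) (4k) = 2·2k ↔ 4k ∣ r²-1
  have step2 : Int.gcd (r^2-1) ((4*k:ℕ):ℤ) = 2*(2*k) ↔ ((4*k:ℕ):ℤ) ∣ r^2-1 := by
    constructor
    · intro h
      have h1 : (↑(Int.gcd (r^2-1) ((4*k:ℕ):ℤ)) : ℤ) ∣ r^2-1 := (Int.gcd_dvd_left _ _)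
      rw [h] at h1
      have : ((4*k:ℕ):ℤ) = ((2*(2*k):ℕ):ℤ) := by push_cast; ring
      rw [this]
      exact_mod_cast h1
    · intro h
      have h1 : (4*k) ∣ Int.gcd (r^2-1) ((4*k:ℕ):ℤ) := by
        have := Int.dvd_coe_gcd h (dvd_refl ((4*k:ℕ):ℤ))
        exact_mod_cast this
      have h2 : Int.gcd (r^2-1) ((4*k:ℕ):ℤ) ∣ 4*k := by
        have := Int.gcd_dvd_right (a := r^2-1) (b := ((4*k:ℕ):ℤ))
        exact_mod_cast this
      have := Nat.dvd_antisymm h2 h1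
      omega
  rw [step2]
  -- 4k ∣ r²-1 ↔ existential
  constructor
  · intro h4
    obtain ⟨t, u, hu, hk'⟩ := Nat.exists_eq_two_pow_mul_odd (show k ≠ 0 by omega)
    refine ⟨t+2, u, by rw [hk']; ring, hu, by omega, ?_⟩
    have h2p : (2:ℤ)^(t+2) ∣ r^2 - 1 := by
      refine dvd_trans ⟨(u:ℤ), ?_⟩ h4
      push_cast [hk']
      ring
    have htt : (t+2)-1 = t+1 := rfl
    rcases Int.even_or_odd m with ⟨d, hd⟩ | ⟨d, hd⟩
    · left
      have hr4 : r = 4*d+1 := by omega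
      have hcou : IsCoprime ((2:ℤ)^(t+1)) ((2*d+1 : ℤ)) :=
        (coprime_two_int _ ⟨d, rfl⟩).pow_left
      have hdd : (2:ℤ)^(t+1) ∣ (4*d) * (2*d+1) := by
        apply (mul_dvd_mul_iff_left (two_ne_zero (α := ℤ))).mp
        have e2 : r^2-1 = 2 * ((4*d) * (2*d+1)) := by rw [hr4]; ring
        rw [show (2:ℤ) * (2^(t+1)) = 2^(t+2) from by ring, ← e2]
        exact h2p
      have hfin : (2:ℤ)^(t+1) ∣ 4*d := hcou.dvd_of_dvd_mul_right hdd
      rw [htt, Int.modEq_iff_dvd, show (1:ℤ) - r = -(4*d) from by omega]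
      exact dvd_neg.mpr hfin
    · right
      have hr4 : r = 4*d+3 := by omega
      have hcou : IsCoprime ((2:ℤ)^(t+1)) ((2*d+1 : ℤ)) :=
        (coprime_two_int _ ⟨d, rfl⟩).pow_left
      have hdd : (2:ℤ)^(t+1) ∣ (4*(d+1)) * (2*d+1) := by
        apply (mul_dvd_mul_iff_left (two_ne_zero (α := ℤ))).mp
        have e2 : r^2-1 = 2 * ((4*(d+1)) * (2*d+1)) := by rw [hr4]; ring
        rw [show (2:ℤ) * (2^(t+1)) = 2^(t+2) from by ring, ← e2]
        exact h2p
      have hfin : (2:ℤ)^(t+1) ∣ 4*(d+1) := hcou.dvd_of_dvd_mul_right hdd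
      rw [htt, Int.modEq_iff_dvd, show (-1:ℤ) - r = -(4*(d+1)) from by omega]
      exact dvd_neg.mpr hfin
  · rintro ⟨α, l, hkl, hl, hα, hrm⟩
    have hpow : (2:ℤ)^(α-1) * 2 = 2^α := by
      rw [mul_comm, ← pow_succ']
      congr 1
      omega
    have h2a : (2:ℤ)^α ∣ r^2-1 := by
      rw [show r^2 - 1 = (r-1)*(r+1) from by ring, ← hpow]
      rcases hrm with h | h
      · have hd1 : (2:ℤ)^(α-1) ∣ r - 1 := by
          have := h.dvd
          have e : (1:ℤ) - r = -(r-1) := by ring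
          rw [e, dvd_neg] at this
          exact this
        exact mul_dvd_mul hd1 ⟨m+1, by omega⟩
      · have hd1 : (2:ℤ)^(α-1) ∣ r + 1 := by
          have := h.dvd
          have e : (-1:ℤ) - r = -(r+1) := by ring
          rw [e, dvd_neg] at this
          exact this
        rw [mul_comm (r-1) (r+1)]
        exact mul_dvd_mul hd1 ⟨m, by omega⟩
    have hnsucc : (2:ℕ)^α = 2*2^(α-1) := by
      rw [← pow_succ']
      congr 1
      omega
    have h4e : 2*(2*k) = 2^α * l := by rw [← hkl]; ring
    have h2k' : 2*k = 2^(α-1)*l := by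
      apply Nat.eq_of_mul_eq_mul_left (show 0 < 2 by norm_num)
      rw [h4e, hnsucc]
      ring
    have hl2k : l ∣ 2*k := ⟨2^(α-1), by rw [h2k', mul_comm]⟩
    have hll : ((l:ℕ):ℤ) ∣ r^2-1 := dvd_trans (Int.natCast_dvd_natCast.mpr hl2k) h2k
    have hcop : IsCoprime ((2:ℤ)^α) ((l:ℕ):ℤ) := by
      apply IsCoprime.pow_left
      apply coprime_two_int
      exact_mod_cast hl
    have hfin := hcop.mul_dvd h2a hll
    rw [show ((4*k:ℕ):ℤ) = (2:ℤ)^α * ((l:ℕ):ℤ) from by push_cast [hkl]; ring]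
    exact hfin

/-- Let `m = 4k`, `n = 2k`, `r ∈ R²_m`. Then `|ZDiv(r+1)/⟨r-1⟩| = 2`
(equivalently `gcd(r+1,n)·gcd(r-1,n) = 2n`) if and only if `m = 2^α·l` with `α ≥ 2`, `l` odd,
and `r ≡ ±1 (mod 2^(α-1))`. -/
theorem statement16 (k : ℕ) (hk : 1 ≤ k) (r : ℤ)
    (hr : Int.gcd r (4*k) = 1) (hr2 : r^2 ≡ 1 [ZMOD (2*k)]) :
    (Nat.card (ZDiv k ((r + 1 : ℤ) : ZMod (2*k)) ⧸
        (AddSubgroup.zmultiples ((r - 1 : ℤ) : ZMod (2*k))).addSubgroupOf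
          (ZDiv k ((r + 1 : ℤ) : ZMod (2*k)))) = 2
      ↔ ∃ α l : ℕ, 4*k = 2^α * l ∧ Odd l ∧ 2 ≤ α ∧
          (r ≡ 1 [ZMOD (2^(α-1))] ∨ r ≡ -1 [ZMOD (2^(α-1))]))
    ∧ (Int.gcd (r + 1) (2*k) * Int.gcd (r - 1) (2*k) = 2 * (2*k)
      ↔ ∃ α l : ℕ, 4*k = 2^α * l ∧ Odd l ∧ 2 ≤ α ∧
          (r ≡ 1 [ZMOD (2^(α-1))] ∨ r ≡ -1 [ZMOD (2^(α-1))])) := by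
  have hk0 : k ≠ 0 := by omega
  have hn : 2*k ≠ 0 := by omega
  haveI : NeZero (2*k) := ⟨hn⟩
  have hodd : Odd r := by
    rcases Int.even_or_odd r with he | ho
    · exfalso
      obtain ⟨c, hc⟩ := he
      have h2 : (2:ℤ) ∣ (Int.gcd r (4*(k:ℤ)) : ℤ) :=
        Int.dvd_coe_gcd ⟨c, by omega⟩ ⟨2*k, by ring⟩
      rw [hr] at h2
      norm_num at h2
    · exact ho
  have h2k : ((2*k:ℕ):ℤ) ∣ r^2 - 1 := by
    have hd := hr2.dvd
    have e : (1:ℤ) - r^2 = -(r^2-1) := by ring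
    rw [e, dvd_neg] at hd
    exact_mod_cast hd
  have hNT := NT k hk r hodd h2k
  have hcast : ((2*k:ℕ):ℤ) = 2*(k:ℤ) := by push_cast; ring
  rw [hcast] at hNT
  have hcd : ((r + 1 : ℤ) : ZMod (2*k)) * ((r - 1 : ℤ) : ZMod (2*k)) = 0 := by
    rw [← Int.cast_mul, ZMod.intCast_zmod_eq_zero_iff_dvd,
      show (r+1)*(r-1) = r^2-1 from by ring]
    exact h2k
  have hle : AddSubgroup.zmultiples ((r - 1 : ℤ) : ZMod (2*k)) ≤
      ZDiv k ((r + 1 : ℤ) : ZMod (2*k)) := by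
    rintro y ⟨t, rfl⟩
    show ((r + 1 : ℤ) : ZMod (2*k)) * (t • ((r - 1 : ℤ) : ZMod (2*k))) = 0
    rw [zsmul_eq_mul, mul_left_comm, hcd, mul_zero]
  have lag : Nat.card (ZDiv k ((r + 1 : ℤ) : ZMod (2*k))) =
      Nat.card (ZDiv k ((r + 1 : ℤ) : ZMod (2*k)) ⧸
        (AddSubgroup.zmultiples ((r - 1 : ℤ) : ZMod (2*k))).addSubgroupOf
          (ZDiv k ((r + 1 : ℤ) : ZMod (2*k)))) *
      Nat.card ((AddSubgroup.zmultiples ((r - 1 : ℤ) : ZMod (2*k))).addSubgroupOf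
          (ZDiv k ((r + 1 : ℤ) : ZMod (2*k)))) :=
    AddSubgroup.card_eq_card_quotient_mul_card_addSubgroup _
  have hsub : Nat.card ((AddSubgroup.zmultiples ((r - 1 : ℤ) : ZMod (2*k))).addSubgroupOf
          (ZDiv k ((r + 1 : ℤ) : ZMod (2*k)))) =
      Nat.card (AddSubgroup.zmultiples ((r - 1 : ℤ) : ZMod (2*k))) :=
    Nat.card_congr (AddSubgroup.addSubgroupOfEquivOfLe hle).toEquiv
  have hA : Nat.card (ZDiv k ((r + 1 : ℤ) : ZMod (2*k))) = Int.gcd (r+1) (2*(k:ℤ)) := by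
    have h := card_ZDiv k hk0 (r+1)
    rw [hcast] at h
    exact h
  have hB : Nat.card (AddSubgroup.zmultiples ((r - 1 : ℤ) : ZMod (2*k))) =
      (2*k) / Int.gcd (r-1) (2*(k:ℤ)) := by
    rw [Nat.card_zmultiples]
    have h := addOrder_intCast (r-1) (2*k) hn
    rw [hcast] at h
    exact h
  have hBdvd : Int.gcd (r-1) (2*(k:ℤ)) ∣ 2*k := by
    have h := Int.gcd_dvd_right (a := r-1) (b := ((2*k:ℕ):ℤ))
    rw [hcast] at h
    exact_mod_cast h
  have key : Nat.card (ZDiv k ((r + 1 : ℤ) : ZMod (2*k)) ⧸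
        (AddSubgroup.zmultiples ((r - 1 : ℤ) : ZMod (2*k))).addSubgroupOf
          (ZDiv k ((r + 1 : ℤ) : ZMod (2*k)))) * (2*k) =
      Int.gcd (r+1) (2*(k:ℤ)) * Int.gcd (r-1) (2*(k:ℤ)) := by
    rw [← hA, lag, hsub, hB, mul_assoc, Nat.div_mul_cancel hBdvd]
  refine ⟨?_, hNT⟩
  rw [← hNT]
  constructor
  · intro h
    rw [← key, h]
  · intro h
    apply Nat.eq_of_mul_eq_mul_right (show 0 < 2*k by omega)
    rw [key, h]

end QDPaper
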